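/- Let Γ be a simple polygon, F a finite set of guards covering the boundary of Γ but not all of Γ, R the hidden region, and R₀ a connected component of R. For every line ℓ supporting a boundary segment of the closure of R₀, there is a guard in F lying on ℓ. -/

import Mathlib

open Set

noncomputable section

/-- Points of the Euclidean plane. -/
abbrev Pt : Type := EuclideanSpace ℝ (Fin 2)

/-- A simple polygon: a compact region of the plane bounded by a simple closed
polygonal curve.  Vertices are indexed by `ℤ`, periodically with period `n`. -/
structure SimplePolygon where
  carrier : Set Pt
  n : ℕ
  three_le : 3 ≤ n
  vertex : ℤ → Pt
  periodic : ∀ i : ℤ, vertex (i + n) = vertex i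
  vertex_inj : ∀ i j : ℤ, 0 ≤ i → i < n → 0 ≤ j → j < n → vertex i = vertex j → i = j
  compact : IsCompact carrier
  connected : IsConnected carrier
  regular : carrier = closure (interior carrier)
  boundary_eq : frontier carrier = ⋃ i : ℤ, segment ℝ (vertex i) (vertex (i + 1))
  adj_edges : ∀ i j : ℤ, (n : ℤ) ∣ (j - (i + 1)) → ¬ (n : ℤ) ∣ (j - i) →
    segment ℝ (vertex i) (vertex (i + 1)) ∩ segment ℝ (vertex j) (vertex (j + 1)) = {vertex j}
  nonadj_edges : ∀ i j : ℤ, ¬ (n : ℤ) ∣ (j - i) → ¬ (n : ℤ) ∣ (j - (i + 1)) →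
    ¬ (n : ℤ) ∣ (i - (j + 1)) →
    Disjoint (segment ℝ (vertex i) (vertex (i + 1))) (segment ℝ (vertex j) (vertex (j + 1)))

/-- `A`, `B` span a (maximal) boundary segment of the set `R`. -/
def IsBoundarySegment (R : Set Pt) (A B : Pt) : Prop :=
  A ≠ B ∧ segment ℝ A B ⊆ frontier R ∧
  ∀ A' B' : Pt, segment ℝ A B ⊆ segment ℝ A' B' → segment ℝ A' B' ⊆ frontier R →
    segment ℝ A' B' = segment ℝ A B

/-- `ℓ` is a support line of `R`: a line containing a boundary segment of the closure of `R`. -/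
def IsSupportLine (R : Set Pt) (ℓ : AffineSubspace ℝ Pt) : Prop :=
  ∃ A B : Pt, IsBoundarySegment (closure R) A B ∧ ℓ = affineSpan ℝ ({A, B} : Set Pt)

/-- Two regions are adjacent when they share a common boundary edge
(a nondegenerate segment). -/
def AdjacentRegions (R R' : Set Pt) : Prop :=
  R ≠ R' ∧ ∃ C D : Pt, C ≠ D ∧ segment ℝ C D ⊆ closure R ∩ closure R'

namespace SimplePolygon

variable (Γ : SimplePolygon)

/-- `G` sees `A`: the segment `GA` is contained in the polygon. -/
def Sees (G A : Pt) : Prop := segment ℝ G A ⊆ Γ.carrier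

/-- The guard set `F` (visually) covers the set `S`. -/
def Covers (F S : Set Pt) : Prop := ∀ A ∈ S, ∃ G ∈ F, Γ.Sees G A

/-- The view of a point `P`: all points of the polygon seen by `P`. -/
def View (P : Pt) : Set Pt := {A | A ∈ Γ.carrier ∧ Γ.Sees P A}

/-- The hidden region of a guard configuration `F`: points of the polygon seen by no guard. -/
def Hidden (F : Set Pt) : Set Pt := {A | A ∈ Γ.carrier ∧ ∀ G ∈ F, ¬ Γ.Sees G A}

/-- The polygon is normal: every configuration of guards covering the walls covers everything. -/
def Normal : Prop :=
  ∀ F : Set Pt, F ⊆ Γ.carrier → Γ.Covers F (frontier Γ.carrier) → Γ.Covers F Γ.carrier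

/-- The polygon is normal with respect to `A`: every configuration of guards inside `A`
covering the walls covers everything. -/
def NormalWrt (A : Set Pt) : Prop :=
  ∀ F : Set Pt, F ⊆ A → Γ.Covers F (frontier Γ.carrier) → Γ.Covers F Γ.carrier

/-- The corner at `vertex i` is reflex (interior angle exceeding 180°): points slightly
displaced from the vertex in the direction bisecting the (undirected) corner angle lie
outside the polygon. -/
def IsReflexCorner (i : ℤ) : Prop :=
  ∃ δ > (0 : ℝ), ∀ ε : ℝ, 0 < ε → ε < δ →
    Γ.vertex i + ε • ((Γ.vertex (i - 1) - Γ.vertex i) + (Γ.vertex (i + 1) - Γ.vertex i)) ∉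
      Γ.carrier

/-- The set of (indices in one period of) reflex corners of the polygon. -/
def reflexCorners : Set ℤ := {i : ℤ | 0 ≤ i ∧ i < Γ.n ∧ Γ.IsReflexCorner i}

/-- `(P, i)` is a feasible pair: `vertex i` is a reflex corner visible from `P` and the two
walls at the corner lie (weakly) on the same side of the line through `P` and `vertex i`. -/
def IsFeasible (P : Pt) (i : ℤ) : Prop :=
  Γ.IsReflexCorner i ∧ P ≠ Γ.vertex i ∧ Γ.Sees P (Γ.vertex i) ∧
  ∃ f : Pt →ₗ[ℝ] ℝ, f ≠ 0 ∧ f (Γ.vertex i - P) = 0 ∧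
    0 ≤ f (Γ.vertex (i - 1) - P) ∧ 0 ≤ f (Γ.vertex (i + 1) - P)

/-- `w` is a window of `P`: the segment from a reflex corner `C = vertex i` of a feasible
pair `(P, i)` to the farthest boundary point visible from `P` on the ray `P C` beyond `C`. -/
def IsWindow (P : Pt) (w : Set Pt) : Prop :=
  ∃ i : ℤ, ∃ W : Pt, Γ.IsFeasible P i ∧
    (∃ t : ℝ, 0 ≤ t ∧ W = Γ.vertex i + t • (Γ.vertex i - P)) ∧
    W ∈ frontier Γ.carrier ∧ Γ.Sees P W ∧
    (∀ W' : Pt, (∃ t : ℝ, 0 ≤ t ∧ W' = Γ.vertex i + t • (Γ.vertex i - P)) →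
      W' ∈ frontier Γ.carrier → Γ.Sees P W' → dist P W' ≤ dist P W) ∧
    w = segment ℝ (Γ.vertex i) W

/-- The union of all windows of points of `A`. -/
def windows (A : Set Pt) : Set Pt := ⋃₀ {w : Set Pt | ∃ P ∈ A, Γ.IsWindow P w}

/-- The (interiors of the) visibility regions of the visibility decomposition of the polygon
with respect to `A`: connected components of the interior of the polygon with all windows
removed. -/
def regionInteriors (A : Set Pt) : Set (Set Pt) :=
  {R : Set Pt | ∃ x ∈ interior Γ.carrier \ Γ.windows A,
    R = connectedComponentIn (interior Γ.carrier \ Γ.windows A) x}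

/-- `P` sees every point of `R`. -/
def SeesAll (P : Pt) (R : Set Pt) : Prop := ∀ x ∈ R, Γ.Sees P x

/-- `V(R)`: the set of points of `A` that see the (interior of the) region `R`. -/
def Vset (A R : Set Pt) : Set Pt := {P ∈ A | Γ.SeesAll P R}

/-- `R` is a sink of the visibility decomposition with respect to `A`. -/
def IsSink (A R : Set Pt) : Prop :=
  R ∈ Γ.regionInteriors A ∧
  ∀ R' ∈ Γ.regionInteriors A, AdjacentRegions R R' → Γ.Vset A R ⊆ Γ.Vset A R'

end SimplePolygon

section Aux
open Metric AffineMap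

private lemma lineMap_comp' (P Q : Pt) (c d s : ℝ) :
    lineMap (lineMap P Q c) (lineMap P Q d) s = lineMap P Q (c + s * (d - c)) := by
  simp only [AffineMap.lineMap_apply_module]
  module

private lemma lineMap_mem_segment' (P Q : Pt) {t : ℝ} (h0 : 0 ≤ t) (h1 : t ≤ 1) :
    lineMap P Q t ∈ segment ℝ P Q := by
  rw [segment_eq_image_lineMap]; exact ⟨t, ⟨h0, h1⟩, rfl⟩

private lemma isClosed_segment' (P Q : Pt) : IsClosed (segment ℝ P Q) := by
  rw [segment_eq_image_lineMap]
  exact (isCompact_Icc.image AffineMap.lineMap_continuous).isClosed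

private lemma small_step (u : Pt) (c : ℝ) (hc : 0 < c) :
    ∃ t : ℝ, 0 < t ∧ ‖t • u‖ < c := by
  refine ⟨c / (2 * (‖u‖ + 1)), by positivity, ?_⟩
  have hu : 0 ≤ ‖u‖ := norm_nonneg u
  rw [norm_smul, Real.norm_eq_abs, abs_of_pos (by positivity)]
  rw [div_mul_eq_mul_div, div_lt_iff₀ (by positivity)]
  nlinarith

private lemma exists_basis (G C D : Pt) (hCD : C ≠ D)
    (hG : G ∉ affineSpan ℝ ({C, D} : Set Pt)) :
    ∃ b : AffineBasis (Fin 3) ℝ Pt, b 0 = G ∧ b 1 = C ∧ b 2 = D ∧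
      Set.range (b : Fin 3 → Pt) = {G, C, D} := by
  have hcol : ¬ Collinear ℝ ({G, C, D} : Set Pt) := by
    intro h
    exact hG (h.mem_affineSpan_of_mem_of_ne
      (mem_insert_of_mem _ (mem_insert C {D}))
      (mem_insert_of_mem _ (mem_insert_of_mem _ rfl)) (mem_insert _ _) hCD)
  have hind : AffineIndependent ℝ ![G, C, D] := affineIndependent_iff_not_collinear_set.mpr hcol
  have htot : affineSpan ℝ (Set.range ![G, C, D]) = ⊤ := by
    rw [hind.affineSpan_eq_top_iff_card_eq_finrank_add_one]
    simp [finrank_euclideanSpace_fin]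
  refine ⟨⟨![G, C, D], hind, htot⟩, rfl, rfl, rfl, ?_⟩
  ext z
  constructor
  · rintro ⟨j, rfl⟩
    fin_cases j
    · exact Or.inl rfl
    · exact Or.inr (Or.inl rfl)
    · exact Or.inr (Or.inr rfl)
  · intro hz
    rcases hz with rfl | rfl | rfl
    exacts [⟨0, rfl⟩, ⟨1, rfl⟩, ⟨2, rfl⟩]

private lemma isClosed_sees (Γ : SimplePolygon) (G : Pt) : IsClosed {A : Pt | Γ.Sees G A} := by
  have h : {A : Pt | Γ.Sees G A} = ⋂ t ∈ Icc (0:ℝ) 1, {A : Pt | lineMap G A t ∈ Γ.carrier} := by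
    ext A
    simp only [mem_setOf_eq, mem_iInter, SimplePolygon.Sees, segment_eq_image_lineMap,
      image_subset_iff]
    exact ⟨fun h t ht => h ht, fun h t ht => h t ht⟩
  rw [h]
  refine isClosed_biInter fun t _ => ?_
  have hc : Continuous fun A : Pt => lineMap G A t := by
    simp only [AffineMap.lineMap_apply_module']
    exact ((continuous_id.sub continuous_const).const_smul t).add continuous_const
  exact IsClosed.preimage hc Γ.compact.isClosed

private lemma hidden_isOpen (Γ : SimplePolygon) {F : Set Pt} (hFfin : F.Finite)
    (hwalls : Γ.Covers F (frontier Γ.carrier)) : IsOpen (Γ.Hidden F) := by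
  have heq : Γ.Hidden F = interior Γ.carrier ∩ ⋂ G ∈ F, {A : Pt | Γ.Sees G A}ᶜ := by
    ext A
    constructor
    · rintro ⟨hA, hG⟩
      refine ⟨?_, ?_⟩
      · by_contra hint
        have hfr : A ∈ frontier Γ.carrier := by
          rw [Γ.compact.isClosed.frontier_eq]
          exact ⟨hA, hint⟩
        obtain ⟨G, hGF, hsee⟩ := hwalls A hfr
        exact hG G hGF hsee
      · simp only [mem_iInter, mem_compl_iff, mem_setOf_eq]
        exact hG
    · rintro ⟨hA, hG⟩
      simp only [mem_iInter, mem_compl_iff, mem_setOf_eq] at hG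
      exact ⟨interior_subset hA, hG⟩
  rw [heq]
  exact isOpen_interior.inter (hFfin.isOpen_biInter fun G _ => (isClosed_sees Γ G).isOpen_compl)

private lemma hull_subset_carrier (Γ : SimplePolygon) {G C D : Pt}
    (hsee : ∀ z ∈ segment ℝ C D, Γ.Sees G z) :
    convexHull ℝ ({G, C, D} : Set Pt) ⊆ Γ.carrier := by
  intro p hp
  have h : ({G, C, D} : Set Pt) = insert G {C, D} := rfl
  rw [h, convexHull_insert ⟨C, mem_insert C {D}⟩, convexHull_pair, mem_convexJoin] at hp
  obtain ⟨a, ha, b, hb, hpseg⟩ := hp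
  rcases ha with rfl
  exact hsee b hb hpseg

private lemma baire_on_segment {ι : Type*} [Countable ι] (P Q : Pt) (hPQ : P ≠ Q)
    (f : ι → Set Pt) (hf : ∀ i, IsClosed (f i))
    (hcov : ∀ y ∈ segment ℝ P Q, ∃ i, y ∈ f i) :
    ∃ i, ∃ C D : Pt, C ≠ D ∧ segment ℝ C D ⊆ segment ℝ P Q ∧ segment ℝ C D ⊆ f i := by
  haveI : Nonempty (Icc (0:ℝ) 1) := ⟨⟨0, by norm_num⟩⟩
  haveI : CompleteSpace (Icc (0:ℝ) 1) := (isClosed_Icc (a := (0:ℝ)) (b := 1)).completeSpace_coe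
  set S : ι → Set (Icc (0:ℝ) 1) := fun i => (fun t : Icc (0:ℝ) 1 => lineMap P Q t.1) ⁻¹' f i
    with hS
  have hScl : ∀ i, IsClosed (S i) :=
    fun i => (hf i).preimage (AffineMap.lineMap_continuous.comp continuous_subtype_val)
  have hSU : ⋃ i, S i = univ := by
    apply eq_univ_of_forall
    intro t
    obtain ⟨i, hi⟩ := hcov (lineMap P Q t.1) (lineMap_mem_segment' P Q t.2.1 t.2.2)
    exact mem_iUnion.mpr ⟨i, hi⟩
  obtain ⟨i, t₀, ht₀⟩ := nonempty_interior_of_iUnion_of_closed hScl hSU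
  rw [mem_interior_iff_mem_nhds, Metric.mem_nhds_iff] at ht₀
  obtain ⟨ε, hεpos, hball⟩ := ht₀
  set c := max 0 (t₀.1 - ε/2) with hc
  set d := min 1 (t₀.1 + ε/2) with hd
  have hc0 : 0 ≤ c := le_max_left _ _
  have hd1 : d ≤ 1 := min_le_left _ _
  have hct : c ≤ t₀.1 := max_le t₀.2.1 (by linarith)
  have htd : t₀.1 ≤ d := le_min t₀.2.2 (by linarith)
  have hcd : c < d := by
    rcases lt_or_ge t₀.1 1 with h | h
    · exact lt_of_le_of_lt hct (lt_min h (by linarith))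
    · have ht1 : t₀.1 = 1 := le_antisymm t₀.2.2 h
      have : c < 1 := max_lt (by norm_num) (by rw [ht1]; linarith)
      calc c < 1 := this
        _ ≤ d := le_min le_rfl (by rw [ht1]; linarith)
  have hmem : ∀ t : ℝ, c ≤ t → t ≤ d → lineMap P Q t ∈ f i := by
    intro t h1 h2
    have ht01 : t ∈ Icc (0:ℝ) 1 := ⟨le_trans hc0 h1, le_trans h2 hd1⟩
    have hdist : dist (⟨t, ht01⟩ : Icc (0:ℝ) 1) t₀ < ε := by
      rw [Subtype.dist_eq, Real.dist_eq, abs_sub_lt_iff]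
      constructor
      · have : t ≤ t₀.1 + ε/2 := le_trans h2 (min_le_right _ _)
        linarith
      · have : t₀.1 - ε/2 ≤ t := le_trans (le_max_right _ _) h1
        linarith
    exact hball hdist
  refine ⟨i, lineMap P Q c, lineMap P Q d, (lineMap_injective ℝ hPQ).ne hcd.ne, ?_, ?_⟩
  · exact (convex_segment P Q).segment_subset (lineMap_mem_segment' P Q hc0 (hcd.le.trans hd1))
      (lineMap_mem_segment' P Q (hc0.trans hcd.le) hd1)
  · intro y hy
    rw [segment_eq_image_lineMap] at hy
    obtain ⟨s, hs, rfl⟩ := hy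
    rw [lineMap_comp']
    refine hmem _ (le_add_of_nonneg_right (mul_nonneg hs.1 (by linarith))) ?_
    have h1 : s * (d - c) ≤ d - c := mul_le_of_le_one_left (by linarith) hs.2
    linarith

end Aux
section Aux2
open Metric AffineMap

private lemma coord_lineMap (b : AffineBasis (Fin 3) ℝ Pt) (i : Fin 3) (P Q : Pt) (t : ℝ) :
    b.coord i (lineMap P Q t) = (1 - t) * b.coord i P + t * b.coord i Q := by
  rw [AffineMap.apply_lineMap, AffineMap.lineMap_apply_module, smul_eq_mul, smul_eq_mul]

set_option maxHeartbeats 1000000 in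
private lemma mem_closure_compl (Γ : SimplePolygon) {F : Set Pt} {G C D y : Pt}
    (hGF : G ∈ F) (hCD : C ≠ D) (hG : G ∉ affineSpan ℝ ({C, D} : Set Pt))
    (hsee : ∀ z ∈ segment ℝ C D, Γ.Sees G z)
    (hy : y ∈ openSegment ℝ C D) (hyH : y ∈ closure (Γ.Hidden F)) :
    y ∈ closure (Γ.carrierᶜ) := by
  obtain ⟨b, hb0, hb1, hb2, hrange⟩ := exists_basis G C D hCD hG
  have hhull := hull_subset_carrier Γ hsee
  have hintT : interior (convexHull ℝ ({G, C, D} : Set Pt)) = {z | ∀ i, 0 < b.coord i z} := by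
    rw [← hrange]; exact b.interior_convexHull
  rw [openSegment_eq_image_lineMap] at hy
  obtain ⟨lam, hlam, hyeq⟩ := hy
  have hcoordG : ∀ i : Fin 3, b.coord i G = if i = 0 then 1 else 0 := by
    intro i; rw [← hb0, AffineBasis.coord_apply]
  have hcoordC : ∀ i : Fin 3, b.coord i C = if i = 1 then 1 else 0 := by
    intro i; rw [← hb1, AffineBasis.coord_apply]
  have hcoordD : ∀ i : Fin 3, b.coord i D = if i = 2 then 1 else 0 := by
    intro i; rw [← hb2, AffineBasis.coord_apply]
  rw [Metric.mem_closure_iff]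
  intro ε hε
  set Bd : ℝ := dist G y + 1 with hBd
  have hBdpos : 0 < Bd := by positivity
  set ρ : ℝ := min (1/2) (ε / (2 * Bd)) with hρ
  have hρpos : 0 < ρ := lt_min (by norm_num) (by positivity)
  have hρ1 : ρ < 1 := lt_of_le_of_lt (min_le_left _ _) (by norm_num)
  have hρ2 : ρ * Bd ≤ ε / 2 := by
    have h1 : ρ ≤ ε / (2 * Bd) := min_le_right _ _
    calc ρ * Bd ≤ ε / (2 * Bd) * Bd := by nlinarith
      _ = ε / 2 := by field_simp
  set v : Pt := lineMap G y (1 - ρ) with hv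
  have hvi : ∀ i, b.coord i v =
      (1 - (1 - ρ)) * b.coord i G + (1 - ρ) * ((1 - lam) * b.coord i C + lam * b.coord i D) := by
    intro i
    rw [hv, coord_lineMap b i G y (1 - ρ), ← hyeq, coord_lineMap b i C D lam]
  have hvint : v ∈ interior (convexHull ℝ ({G, C, D} : Set Pt)) := by
    rw [hintT]
    intro i
    rw [hvi i, hcoordG i, hcoordC i, hcoordD i]
    fin_cases i <;> norm_num [Fin.ext_iff] <;> nlinarith [hlam.1, hlam.2, hρpos, hρ1]
  obtain ⟨r, hrpos, hball⟩ := Metric.isOpen_iff.mp isOpen_interior v hvint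
  set δ : ℝ := min r (min (ε/2) 1) with hδ
  have hδpos : 0 < δ := lt_min hrpos (lt_min (by positivity) one_pos)
  obtain ⟨z, hzH, hzd⟩ := Metric.mem_closure_iff.mp hyH δ hδpos
  have hnsee : ¬ Γ.Sees G z := hzH.2 G hGF
  rw [SimplePolygon.Sees] at hnsee
  obtain ⟨q, hqseg, hqnot⟩ := not_subset.mp hnsee
  rw [segment_eq_image_lineMap] at hqseg
  obtain ⟨tq, htq, hqeq⟩ := hqseg
  have hS : ∀ t : ℝ, 0 ≤ t → t ≤ 1 - ρ → lineMap G z t ∈ convexHull ℝ ({G, C, D} : Set Pt) := by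
    have hconv : Convex ℝ ((lineMap G z : ℝ →ᵃ[ℝ] Pt) ⁻¹' convexHull ℝ ({G, C, D} : Set Pt)) :=
      (convex_convexHull ℝ _).affine_preimage _
    have h0 : (0:ℝ) ∈ (lineMap G z : ℝ →ᵃ[ℝ] Pt) ⁻¹' convexHull ℝ ({G, C, D} : Set Pt) := by
      simp only [mem_preimage, AffineMap.lineMap_apply_zero]
      exact subset_convexHull ℝ _ (mem_insert _ _)
    have h1 : (1 - ρ) ∈ (lineMap G z : ℝ →ᵃ[ℝ] Pt) ⁻¹' convexHull ℝ ({G, C, D} : Set Pt) := by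
      simp only [mem_preimage]
      apply interior_subset
      apply hball
      have heq : lineMap G z (1 - ρ) - v = (1 - ρ) • (z - y) := by
        rw [hv]
        simp only [AffineMap.lineMap_apply_module]
        module
      rw [mem_ball, dist_eq_norm, heq, norm_smul, Real.norm_eq_abs,
        abs_of_pos (by linarith : (0:ℝ) < 1 - ρ)]
      have hzy : ‖z - y‖ < δ := by rw [← dist_eq_norm, dist_comm]; exact hzd
      have hδr : δ ≤ r := min_le_left _ _
      nlinarith
    intro t ht0 ht1
    have htseg : t ∈ segment ℝ (0:ℝ) (1 - ρ) := by
      rw [segment_eq_Icc (by linarith : (0:ℝ) ≤ 1 - ρ)]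
      exact ⟨ht0, ht1⟩
    exact hconv.segment_subset h0 h1 htseg
  have htqbig : 1 - ρ < tq := by
    by_contra hcon
    push_neg at hcon
    exact hqnot (hhull (hqeq ▸ hS tq htq.1 hcon))
  refine ⟨q, hqnot, ?_⟩
  have hqz : dist q z ≤ ρ * dist G z := by
    have heq : q - z = (1 - tq) • (G - z) := by
      rw [← hqeq]
      simp only [AffineMap.lineMap_apply_module]
      module
    rw [dist_eq_norm, heq, norm_smul, Real.norm_eq_abs, abs_of_nonneg (by linarith [htq.2])]
    rw [dist_eq_norm]
    have h1 : 1 - tq ≤ ρ := by linarith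
    nlinarith [norm_nonneg (G - z)]
  have hGz : dist G z ≤ Bd := by
    have h1 : dist G z ≤ dist G y + dist y z := dist_triangle G y z
    have h2 : dist y z < δ := hzd
    have h3 : δ ≤ 1 := le_trans (min_le_right _ _) (min_le_right _ _)
    rw [hBd]; linarith
  have h4 : dist y q ≤ dist y z + dist z q := dist_triangle y z q
  have h5 : dist z q = dist q z := dist_comm z q
  have h6 : dist y z < δ := hzd
  have h7 : δ ≤ ε/2 := le_trans (min_le_right _ _) (min_le_left _ _)
  have h8 : ρ * dist G z ≤ ρ * Bd := by nlinarith
  calc dist y q ≤ dist y z + dist q z := by rw [← h5]; exact h4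
    _ < δ + ρ * Bd := by
        have := hqz.trans h8
        linarith
    _ ≤ ε/2 + ε/2 := add_le_add h7 hρ2
    _ = ε := by ring

end Aux2
section Aux3
open Metric AffineMap

private lemma vertex_add_mul (Γ : SimplePolygon) (j : ℤ) (k : ℤ) :
    Γ.vertex (j + k * Γ.n) = Γ.vertex j := by
  induction k using Int.induction_on with
  | zero => simp
  | succ k ih =>
    have h := Γ.periodic (j + k * Γ.n)
    rw [show j + (k + 1 : ℤ) * Γ.n = j + k * Γ.n + Γ.n by ring, h, ih]
  | pred k ih =>
    have h := Γ.periodic (j + (-(k:ℤ) - 1) * Γ.n)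
    rw [show j + (-(k:ℤ) - 1) * Γ.n + Γ.n = j + (-(k:ℤ)) * Γ.n by ring] at h
    exact h.symm.trans ih

private lemma vertex_congr (Γ : SimplePolygon) {a c : ℤ} (h : (Γ.n : ℤ) ∣ (a - c)) :
    Γ.vertex a = Γ.vertex c := by
  obtain ⟨k, hk⟩ := h
  have ha : a = c + k * Γ.n := by rw [mul_comm] at hk; linarith
  rw [ha]
  exact vertex_add_mul Γ c k

private lemma edge_congr (Γ : SimplePolygon) {a c : ℤ} (h : (Γ.n : ℤ) ∣ (a - c)) :
    segment ℝ (Γ.vertex a) (Γ.vertex (a + 1)) = segment ℝ (Γ.vertex c) (Γ.vertex (c + 1)) := by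
  rw [vertex_congr Γ h, vertex_congr Γ (show (Γ.n : ℤ) ∣ (a + 1) - (c + 1) by
    rw [show (a + 1) - (c + 1) = a - c by ring]; exact h)]

end Aux3
open Metric AffineMap in
set_option maxHeartbeats 2000000 in
/-- every support line of a connected component of the hidden region
contains a guard. -/
theorem guard_on_support_line (Γ : SimplePolygon) (F : Set Pt) (hF : F ⊆ Γ.carrier) (hFfin : F.Finite)
    (hwalls : Γ.Covers F (frontier Γ.carrier)) (hnotall : ¬ Γ.Covers F Γ.carrier)
    (x : Pt) (hx : x ∈ Γ.Hidden F)
    (ℓ : AffineSubspace ℝ Pt)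
    (hℓ : IsSupportLine (connectedComponentIn (Γ.Hidden F) x) ℓ) :
    ∃ G ∈ F, G ∈ ℓ := by
  classical
  by_contra hcon
  push_neg at hcon
  obtain ⟨A, B, ⟨hAB, hseg, -⟩, hℓeq⟩ := hℓ
  subst hℓeq
  set R₀ := connectedComponentIn (Γ.Hidden F) x with hR₀def
  have hHidOpen := hidden_isOpen Γ hFfin hwalls
  have hHid_car : Γ.Hidden F ⊆ Γ.carrier := fun z hz => hz.1
  have hclosHid_car : closure (Γ.Hidden F) ⊆ Γ.carrier :=
    closure_minimal hHid_car Γ.compact.isClosed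
  have hfrsub : frontier (closure R₀) ⊆ closure R₀ := by
    have h := frontier_subset_closure (s := closure R₀)
    rwa [closure_closure] at h
  have hsegR₀ : segment ℝ A B ⊆ closure R₀ := fun y hy => hfrsub (hseg hy)
  have hsegclos : segment ℝ A B ⊆ closure (Γ.Hidden F) := fun y hy =>
    closure_mono (connectedComponentIn_subset _ _) (hsegR₀ hy)
  have hseen : ∀ y ∈ segment ℝ A B, ∃ G ∈ F, Γ.Sees G y := by
    intro y hy
    by_contra hnot
    push_neg at hnot
    have hyHid : y ∈ Γ.Hidden F := ⟨hclosHid_car (hsegclos hy), hnot⟩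
    have hyR₀ : y ∈ R₀ := by
      have hpre : IsPreconnected (insert y R₀) :=
        isPreconnected_connectedComponentIn.subset_closure (subset_insert y R₀)
          (insert_subset_iff.mpr ⟨hsegR₀ hy, subset_closure⟩)
      exact hpre.subset_connectedComponentIn
        (mem_insert_of_mem _ (mem_connectedComponentIn hx))
        (insert_subset_iff.mpr ⟨hyHid, connectedComponentIn_subset _ _⟩) (mem_insert y R₀)
    have hR₀open : IsOpen R₀ := hHidOpen.connectedComponentIn
    have hyint : y ∈ interior (closure R₀) :=
      interior_maximal subset_closure hR₀open hyR₀
    have hyfr := hseg hy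
    rw [frontier_eq_closure_inter_closure, closure_compl] at hyfr
    exact hyfr.2 hyint
  have hABspan : segment ℝ A B ⊆ (affineSpan ℝ ({A, B} : Set Pt) : Set Pt) :=
    (affineSpan ℝ ({A, B} : Set Pt)).convex.segment_subset
      (subset_affineSpan ℝ _ (mem_insert _ _))
      (subset_affineSpan ℝ _ (mem_insert_of_mem _ rfl))
  have hnotspan : ∀ P Q : Pt, P ∈ segment ℝ A B → Q ∈ segment ℝ A B → ∀ G ∈ F,
      G ∉ affineSpan ℝ ({P, Q} : Set Pt) := by
    intro P Q hP hQ G hGF hmem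
    refine hcon G hGF ?_
    have hle : affineSpan ℝ ({P, Q} : Set Pt) ≤ affineSpan ℝ ({A, B} : Set Pt) :=
      affineSpan_le.mpr (insert_subset_iff.mpr
        ⟨hABspan hP, singleton_subset_iff.mpr (hABspan hQ)⟩)
    exact hle hmem
  -- Baire 1 : some guard sees a whole subsegment of AB
  obtain ⟨G₀', C, D, hCDne, hCDsub, hCDf⟩ :=
    baire_on_segment A B hAB
      (fun G : {G // G ∈ hFfin.toFinset} => {z : Pt | Γ.Sees G.1 z})
      (fun G => isClosed_sees Γ G.1)
      (fun y hy => by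
        obtain ⟨G, hGF, hsee⟩ := hseen y hy
        exact ⟨⟨G, hFfin.mem_toFinset.mpr hGF⟩, hsee⟩)
  obtain ⟨G₀, hG₀mem⟩ := G₀'
  have hG₀F : G₀ ∈ F := hFfin.mem_toFinset.mp hG₀mem
  have hCDsees : ∀ z ∈ segment ℝ C D, Γ.Sees G₀ z := fun z hz => hCDf hz
  have hCmem : C ∈ segment ℝ A B := hCDsub (left_mem_segment ℝ C D)
  have hDmem : D ∈ segment ℝ A B := hCDsub (right_mem_segment ℝ C D)
  -- every point of the open subsegment lies on the polygon boundary
  have hfr : ∀ y ∈ openSegment ℝ C D, y ∈ frontier Γ.carrier := by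
    intro y hy
    have hyseg : y ∈ segment ℝ C D := openSegment_subset_segment ℝ C D hy
    have hyAB := hCDsub hyseg
    have hcc := mem_closure_compl Γ hG₀F hCDne (hnotspan C D hCmem hDmem G₀ hG₀F)
      hCDsees hy (hsegclos hyAB)
    rw [frontier_eq_closure_inter_closure, Γ.compact.isClosed.closure_eq]
    exact ⟨hclosHid_car (hsegclos hyAB), hcc⟩
  -- Baire 2 : some polygon edge contains a subsubsegment
  set C₁ := lineMap C D (1/4 : ℝ) with hC₁def
  set D₁ := lineMap C D (3/4 : ℝ) with hD₁def
  have hC₁D₁ne : C₁ ≠ D₁ := fun h => by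
    have h2 := lineMap_injective ℝ hCDne h; norm_num at h2
  have hsub₁ : segment ℝ C₁ D₁ ⊆ openSegment ℝ C D := by
    intro y hy
    rw [segment_eq_image_lineMap] at hy
    obtain ⟨s, hs, rfl⟩ := hy
    rw [hC₁def, hD₁def, lineMap_comp']
    rw [openSegment_eq_image_lineMap]
    refine ⟨1/4 + s * (3/4 - 1/4), ⟨?_, ?_⟩, rfl⟩
    · have := mul_nonneg hs.1 (by norm_num : (0:ℝ) ≤ 3/4 - 1/4); linarith
    · have := mul_le_of_le_one_left (by norm_num : (0:ℝ) ≤ 3/4 - 1/4) hs.2; linarith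
  obtain ⟨i, C', D', hC'D'ne, hsub₂, hedge⟩ :=
    baire_on_segment C₁ D₁ hC₁D₁ne
      (fun i : ℤ => segment ℝ (Γ.vertex i) (Γ.vertex (i + 1)))
      (fun i => isClosed_segment' _ _)
      (fun y hy => by
        have h := hfr y (hsub₁ hy)
        rw [Γ.boundary_eq] at h
        exact mem_iUnion.mp h)
  have hC'seg : segment ℝ C' D' ⊆ segment ℝ A B := fun z hz =>
    hCDsub (openSegment_subset_segment ℝ C D (hsub₁ (hsub₂ hz)))
  have hC'sees : ∀ z ∈ segment ℝ C' D', Γ.Sees G₀ z := fun z hz =>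
    hCDsees z (openSegment_subset_segment ℝ C D (hsub₁ (hsub₂ hz)))
  have hG₀span' : G₀ ∉ affineSpan ℝ ({C', D'} : Set Pt) :=
    hnotspan C' D' (hC'seg (left_mem_segment ℝ C' D')) (hC'seg (right_mem_segment ℝ C' D'))
      G₀ hG₀F
  -- choose a good midpoint M on [C',D']
  have hψinj : Function.Injective (lineMap C' D' : ℝ → Pt) := lineMap_injective ℝ hC'D'ne
  have hchoice : ∃ t : ℝ, 0 < t ∧ t < 1 ∧
      lineMap C' D' t ≠ Γ.vertex i ∧ lineMap C' D' t ≠ Γ.vertex (i + 1) := by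
    by_cases e1i : lineMap C' D' (1/4 : ℝ) = Γ.vertex i
    · by_cases e2j : lineMap C' D' (1/2 : ℝ) = Γ.vertex (i + 1)
      · refine ⟨3/4, by norm_num, by norm_num, ?_, ?_⟩
        · intro h; have := hψinj (e1i.trans h.symm); norm_num at this
        · intro h; have := hψinj (e2j.trans h.symm); norm_num at this
      · refine ⟨1/2, by norm_num, by norm_num, ?_, e2j⟩
        intro h; have := hψinj (e1i.trans h.symm); norm_num at this
    · by_cases e1j : lineMap C' D' (1/4 : ℝ) = Γ.vertex (i + 1)
      · by_cases e2i : lineMap C' D' (1/2 : ℝ) = Γ.vertex i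
        · refine ⟨3/4, by norm_num, by norm_num, ?_, ?_⟩
          · intro h; have := hψinj (e2i.trans h.symm); norm_num at this
          · intro h; have := hψinj (e1j.trans h.symm); norm_num at this
        · refine ⟨1/2, by norm_num, by norm_num, e2i, ?_⟩
          intro h; have := hψinj (e1j.trans h.symm); norm_num at this
      · exact ⟨1/4, by norm_num, by norm_num, e1i, e1j⟩
  obtain ⟨tstar, ht0, ht1, hMne1, hMne2⟩ := hchoice
  set M := lineMap C' D' tstar with hMdef
  have hMseg' : M ∈ segment ℝ C' D' := lineMap_mem_segment' _ _ ht0.le ht1.le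
  have hMedge : M ∈ segment ℝ (Γ.vertex i) (Γ.vertex (i + 1)) := hedge hMseg'
  have hMfront : M ∈ frontier Γ.carrier := by
    rw [Γ.boundary_eq]; exact mem_iUnion.mpr ⟨i, hMedge⟩
  have hMnotint : M ∉ interior Γ.carrier := by
    have h := hMfront
    rw [frontier_eq_closure_inter_closure, closure_compl] at h
    exact h.2
  have hMclosHid : M ∈ closure (Γ.Hidden F) := hsegclos (hC'seg hMseg')
  -- the edge through M lies on the line Λ' = span {C', D'}
  set Λ' := affineSpan ℝ ({C', D'} : Set Pt) with hΛ'def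
  have hC'edge : C' ∈ segment ℝ (Γ.vertex i) (Γ.vertex (i + 1)) :=
    hedge (left_mem_segment ℝ C' D')
  have hD'edge : D' ∈ segment ℝ (Γ.vertex i) (Γ.vertex (i + 1)) :=
    hedge (right_mem_segment ℝ C' D')
  rw [segment_eq_image_lineMap] at hC'edge hD'edge
  obtain ⟨a, -, haeq⟩ := hC'edge
  obtain ⟨bb, -, hbeq⟩ := hD'edge
  have hab : a ≠ bb := fun h => hC'D'ne (by rw [← haeq, ← hbeq, h])
  have hviΛ : Γ.vertex i ∈ Λ' := by
    have heq : lineMap C' D' (a / (a - bb)) = Γ.vertex i := by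
      rw [← haeq, ← hbeq, lineMap_comp',
        show a + a / (a - bb) * (bb - a) = 0 by
          field_simp [sub_ne_zero.mpr hab]; ring]
      exact AffineMap.lineMap_apply_zero _ _
    rw [hΛ'def, ← heq]
    exact AffineMap.lineMap_mem_affineSpan_pair _ _ _
  have hvi1Λ : Γ.vertex (i + 1) ∈ Λ' := by
    have heq : lineMap C' D' ((1 - a) / (bb - a)) = Γ.vertex (i + 1) := by
      rw [← haeq, ← hbeq, lineMap_comp',
        show a + (1 - a) / (bb - a) * (bb - a) = 1 by
          field_simp [sub_ne_zero.mpr (Ne.symm hab)]; ring]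
      exact AffineMap.lineMap_apply_one _ _
    rw [hΛ'def, ← heq]
    exact AffineMap.lineMap_mem_affineSpan_pair _ _ _
  have hedgeΛ : segment ℝ (Γ.vertex i) (Γ.vertex (i + 1)) ⊆ (Λ' : Set Pt) :=
    Λ'.convex.segment_subset hviΛ hvi1Λ
  -- residue normalization
  set i₀ : ℤ := i % Γ.n with hi₀def
  have hn0 : (0:ℤ) < Γ.n := by have h := Γ.three_le; omega
  have hi₀0 : 0 ≤ i₀ := Int.emod_nonneg i hn0.ne'
  have hi₀n : i₀ < Γ.n := Int.emod_lt_of_pos i hn0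
  have hdvd_i₀i : (Γ.n:ℤ) ∣ (i₀ - i) := by
    refine ⟨-(i / Γ.n), ?_⟩
    have h := Int.emod_add_mul_ediv i (Γ.n : ℤ)
    rw [hi₀def]; linarith [h]
  have hedge_i₀ : segment ℝ (Γ.vertex i₀) (Γ.vertex (i₀ + 1)) =
      segment ℝ (Γ.vertex i) (Γ.vertex (i + 1)) := edge_congr Γ hdvd_i₀i
  have hvi₀eq : Γ.vertex i₀ = Γ.vertex i := vertex_congr Γ hdvd_i₀i
  have hvi₀1eq : Γ.vertex (i₀ + 1) = Γ.vertex (i + 1) := vertex_congr Γ (by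
    obtain ⟨k, hk⟩ := hdvd_i₀i
    exact ⟨k, by linarith⟩)
  have hMne_vi₀ : M ≠ Γ.vertex i₀ := by rw [hvi₀eq]; exact hMne1
  have hMne_vi₀1 : M ≠ Γ.vertex (i₀ + 1) := by rw [hvi₀1eq]; exact hMne2
  have hMi₀ : M ∈ segment ℝ (Γ.vertex i₀) (Γ.vertex (i₀ + 1)) := by
    rw [hedge_i₀]; exact hMedge
  -- M is on no other edge
  have hMother : ∀ j : ℤ, 0 ≤ j → j < Γ.n → j ≠ i₀ →
      M ∉ segment ℝ (Γ.vertex j) (Γ.vertex (j + 1)) := by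
    intro j hj0 hjn hji hMj
    by_cases hd1 : (Γ.n:ℤ) ∣ (j - (i₀ + 1))
    · have hnd : ¬ (Γ.n:ℤ) ∣ (j - i₀) := by
        intro hdvd
        have h0 := Int.eq_zero_of_abs_lt_dvd hdvd (abs_lt.mpr ⟨by omega, by omega⟩)
        omega
      have heq := Γ.adj_edges i₀ j hd1 hnd
      have hMvj : M ∈ ({Γ.vertex j} : Set Pt) := heq ▸ ⟨hMi₀, hMj⟩
      have hvj : Γ.vertex j = Γ.vertex (i₀ + 1) := vertex_congr Γ hd1
      exact hMne_vi₀1 ((mem_singleton_iff.mp hMvj).trans hvj)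
    · by_cases hd2 : (Γ.n:ℤ) ∣ (i₀ - (j + 1))
      · have hnd : ¬ (Γ.n:ℤ) ∣ (i₀ - j) := by
          intro hdvd
          have h0 := Int.eq_zero_of_abs_lt_dvd hdvd (abs_lt.mpr ⟨by omega, by omega⟩)
          omega
        have heq := Γ.adj_edges j i₀ hd2 hnd
        have hMvi : M ∈ ({Γ.vertex i₀} : Set Pt) := heq ▸ ⟨hMj, hMi₀⟩
        exact hMne_vi₀ (mem_singleton_iff.mp hMvi)
      · have hnd : ¬ (Γ.n:ℤ) ∣ (j - i₀) := by
          intro hdvd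
          have h0 := Int.eq_zero_of_abs_lt_dvd hdvd (abs_lt.mpr ⟨by omega, by omega⟩)
          omega
        have hdisj := Γ.nonadj_edges i₀ j hnd hd1 hd2
        exact (disjoint_left.mp hdisj hMi₀) hMj
  -- the union of the other edges, a closed set avoiding M
  set K : Set Pt := ⋃ j ∈ (Finset.Icc (0:ℤ) (Γ.n - 1)).filter (fun j => j ≠ i₀),
    segment ℝ (Γ.vertex j) (Γ.vertex (j + 1)) with hKdef
  have hKclosed : IsClosed K :=
    (((Finset.Icc (0:ℤ) (Γ.n - 1)).filter (fun j => j ≠ i₀)).finite_toSet).isClosed_biUnion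
      (fun j _ => isClosed_segment' _ _)
  have hMK : M ∉ K := by
    intro hMK
    rw [hKdef, mem_iUnion₂] at hMK
    obtain ⟨j, hjmem, hMj⟩ := hMK
    rw [Finset.mem_filter, Finset.mem_Icc] at hjmem
    exact hMother j hjmem.1.1 (by omega) hjmem.2 hMj
  obtain ⟨ε₁, hε₁pos, hballK⟩ := Metric.isOpen_iff.mp hKclosed.isOpen_compl M hMK
  have hfr_ball : ∀ z, z ∈ ball M ε₁ → z ∈ frontier Γ.carrier → z ∈ (Λ' : Set Pt) := by
    intro z hz hzfr
    rw [Γ.boundary_eq] at hzfr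
    obtain ⟨j, hzj⟩ := mem_iUnion.mp hzfr
    set j₀ : ℤ := j % Γ.n with hj₀def
    have hj₀0 : 0 ≤ j₀ := Int.emod_nonneg j hn0.ne'
    have hj₀n : j₀ < Γ.n := Int.emod_lt_of_pos j hn0
    have hdvd_j₀j : (Γ.n:ℤ) ∣ (j₀ - j) := by
      refine ⟨-(j / Γ.n), ?_⟩
      have h := Int.emod_add_mul_ediv j (Γ.n : ℤ)
      rw [hj₀def]; linarith [h]
    have hzj₀ : z ∈ segment ℝ (Γ.vertex j₀) (Γ.vertex (j₀ + 1)) := by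
      rw [edge_congr Γ hdvd_j₀j]; exact hzj
    by_cases hj₀i : j₀ = i₀
    · rw [hj₀i, hedge_i₀] at hzj₀
      exact hedgeΛ hzj₀
    · exfalso
      have hzK : z ∈ K := by
        rw [hKdef, mem_iUnion₂]
        refine ⟨j₀, ?_, hzj₀⟩
        rw [Finset.mem_filter, Finset.mem_Icc]
        exact ⟨⟨hj₀0, by omega⟩, hj₀i⟩
      exact hballK hz hzK
  -- affine basis adapted to the triangle G₀ C' D'
  obtain ⟨b', hb0, hb1, hb2, hrange'⟩ := exists_basis G₀ C' D' hC'D'ne hG₀span'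
  have hhull' := hull_subset_carrier Γ hC'sees
  have hint' : interior (convexHull ℝ ({G₀, C', D'} : Set Pt)) =
      {z : Pt | ∀ j, 0 < b'.coord j z} := by
    rw [← hrange']; exact b'.interior_convexHull
  have hcG : ∀ j : Fin 3, b'.coord j G₀ = if j = 0 then 1 else 0 := by
    intro j; rw [← hb0, AffineBasis.coord_apply]
  have hcC : ∀ j : Fin 3, b'.coord j C' = if j = 1 then 1 else 0 := by
    intro j; rw [← hb1, AffineBasis.coord_apply]
  have hcD : ∀ j : Fin 3, b'.coord j D' = if j = 2 then 1 else 0 := by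
    intro j; rw [← hb2, AffineBasis.coord_apply]
  set κ : Pt →ᵃ[ℝ] ℝ := b'.coord 0 with hκdef
  have hκC' : κ C' = 0 := by rw [hκdef, hcC 0]; norm_num [Fin.ext_iff]
  have hκD' : κ D' = 0 := by rw [hκdef, hcD 0]; norm_num [Fin.ext_iff]
  have hκG : κ G₀ = 1 := by rw [hκdef, hcG 0]; norm_num
  have hΛκ : ∀ z ∈ (Λ' : Set Pt), κ z = 0 := by
    intro z hz
    have hzmap : κ z ∈ (Λ'.map κ : Set ℝ) := by
      rw [AffineSubspace.mem_coe, AffineSubspace.mem_map]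
      exact ⟨z, hz, rfl⟩
    rw [hΛ'def, AffineSubspace.map_span, image_pair, hκC', hκD'] at hzmap
    rw [show ({(0:ℝ), (0:ℝ)} : Set ℝ) = {(0:ℝ)} by simp] at hzmap
    exact (AffineSubspace.mem_affineSpan_singleton _ _).mp hzmap
  set u : Pt := G₀ - C' with hudef
  have hκshift : ∀ (z : Pt) (t : ℝ), κ (z + t • u) = κ z + t := by
    intro z t
    have h1 : z + t • u = (t • u) +ᵥ z := by rw [vadd_eq_add, add_comm]
    rw [h1, AffineMap.map_vadd, map_smul]
    have h2 : κ.linear u = 1 := by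
      have h3 := κ.linearMap_vsub G₀ C'
      rw [vsub_eq_sub, hκG, hκC'] at h3
      rw [hudef, h3]; norm_num
    rw [h2, vadd_eq_add, smul_eq_mul, mul_one, add_comm]
  have hκcont : ∀ j : Fin 3, Continuous (b'.coord j) := fun j =>
    (b'.coord j).continuous_of_finiteDimensional
  -- positivity of the other two coordinates near M
  have hc1M : b'.coord 1 M = 1 - tstar := by
    rw [hMdef, coord_lineMap, hcC 1, hcD 1]; norm_num [Fin.ext_iff]
  have hc2M : b'.coord 2 M = tstar := by
    rw [hMdef, coord_lineMap, hcC 2, hcD 2]; norm_num [Fin.ext_iff]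
  have hUopen : IsOpen {z : Pt | 0 < b'.coord 1 z ∧ 0 < b'.coord 2 z} :=
    (isOpen_lt continuous_const (hκcont 1)).inter (isOpen_lt continuous_const (hκcont 2))
  have hMU : M ∈ {z : Pt | 0 < b'.coord 1 z ∧ 0 < b'.coord 2 z} :=
    ⟨by rw [hc1M]; linarith, by rw [hc2M]; linarith⟩
  obtain ⟨ε₂, hε₂pos, hball₂⟩ := Metric.isOpen_iff.mp hUopen M hMU
  set ε₃ : ℝ := min ε₁ ε₂ with hε₃def
  have hε₃pos : 0 < ε₃ := lt_min hε₁pos hε₂pos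
  have hpos_mem : ∀ z ∈ ball M ε₃, 0 < κ z →
      z ∈ interior (convexHull ℝ ({G₀, C', D'} : Set Pt)) := by
    intro z hz hκz
    rw [hint']
    intro j
    have hz₂ := hball₂ (ball_subset_ball (min_le_right ε₁ ε₂) hz)
    have hj3 : j = 0 ∨ j = 1 ∨ j = 2 := by omega
    rcases hj3 with rfl | rfl | rfl
    exacts [hκz, hz₂.1, hz₂.2]
  have hseenpos : ∀ z ∈ ball M ε₃, 0 < κ z → z ∉ Γ.Hidden F := by
    intro z hz hκz hzH
    have hzhull := interior_subset (hpos_mem z hz hκz)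
    have hsee : Γ.Sees G₀ z := fun p hp => hhull'
      ((convex_convexHull ℝ _).segment_subset (subset_convexHull ℝ _ (mem_insert _ _)) hzhull hp)
    exact hzH.2 G₀ hG₀F hsee
  have hzero_not : ∀ z ∈ ball M ε₃, κ z = 0 → z ∉ Γ.Hidden F := by
    intro z hz hκz hzH
    obtain ⟨r', hr'pos, hball'⟩ := Metric.isOpen_iff.mp hHidOpen z hzH
    have hdzM : dist z M < ε₃ := mem_ball.mp hz
    obtain ⟨t, htpos, htn⟩ := small_step u (min r' (ε₃ - dist z M))
      (lt_min hr'pos (by linarith))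
    have hwz : dist (z + t • u) z < min r' (ε₃ - dist z M) := by
      rw [dist_eq_norm, show z + t • u - z = t • u by abel]
      exact htn
    have hwH : (z + t • u) ∈ Γ.Hidden F :=
      hball' (mem_ball.mpr (lt_of_lt_of_le hwz (min_le_left _ _)))
    have hwball : (z + t • u) ∈ ball M ε₃ := by
      rw [mem_ball]
      have h1 := dist_triangle (z + t • u) z M
      have h2 : dist (z + t • u) z < ε₃ - dist z M :=
        lt_of_lt_of_le hwz (min_le_right _ _)
      linarith
    have hκw : κ (z + t • u) = t := by rw [hκshift z t, hκz, zero_add]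
    exact hseenpos _ hwball (by rw [hκw]; exact htpos) hwH
  -- the negative side of the line near M
  set Hneg : Set Pt := ball M ε₃ ∩ {z : Pt | κ z < 0} with hHnegdef
  have hnegconv : Convex ℝ Hneg :=
    (convex_ball M ε₃).inter ((convex_Iio (0:ℝ)).affine_preimage κ)
  have hnegfr : ∀ z ∈ Hneg, z ∉ frontier Γ.carrier := by
    intro z hz hzfr
    have h0 := hΛκ z (hfr_ball z (ball_subset_ball (min_le_left ε₁ ε₂) hz.1) hzfr)
    have hlt := hz.2
    rw [mem_setOf_eq, h0] at hlt
    exact lt_irrefl 0 hlt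
  have hcover : Hneg ⊆ interior Γ.carrier ∪ (closure Γ.carrier)ᶜ := by
    intro z hz
    by_cases hcl : z ∈ closure Γ.carrier
    · left
      by_contra hint2
      exact hnegfr z hz (by
        rw [frontier_eq_closure_inter_closure, closure_compl]; exact ⟨hcl, hint2⟩)
    · right; exact hcl
  have hdisj2 : Disjoint (interior Γ.carrier) (closure Γ.carrier)ᶜ :=
    disjoint_compl_right.mono_left (interior_subset.trans subset_closure)
  rcases hnegconv.isPreconnected.subset_or_subset isOpen_interior
    isClosed_closure.isOpen_compl hdisj2 hcover with hin | hout
  · -- the far side is inside: M would be interior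
    have hballcar : ball M ε₃ ⊆ Γ.carrier := by
      intro z hz
      rcases lt_trichotomy (κ z) 0 with h | h | h
      · exact interior_subset (hin ⟨hz, h⟩)
      · rw [← Γ.compact.isClosed.closure_eq, Metric.mem_closure_iff]
        intro δ hδ
        have hdzM : dist z M < ε₃ := mem_ball.mp hz
        obtain ⟨t, htpos, htn⟩ := small_step u (min δ (ε₃ - dist z M))
          (lt_min hδ (by linarith))
        have hwz : dist (z + t • u) z < min δ (ε₃ - dist z M) := by
          rw [dist_eq_norm, show z + t • u - z = t • u by abel]
          exact htn
        refine ⟨z + t • u, ?_, ?_⟩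
        · apply hhull'
          apply interior_subset
          apply hpos_mem
          · rw [mem_ball]
            have h1 := dist_triangle (z + t • u) z M
            have h2 : dist (z + t • u) z < ε₃ - dist z M :=
              lt_of_lt_of_le hwz (min_le_right _ _)
            linarith
          · rw [hκshift z t, h, zero_add]; exact htpos
        · rw [dist_comm]
          exact lt_of_lt_of_le hwz (min_le_left _ _)
      · exact hhull' (interior_subset (hpos_mem z hz h))
    exact hMnotint (mem_interior_iff_mem_nhds.mpr
      (Filter.mem_of_superset (ball_mem_nhds M hε₃pos) hballcar))
  · -- the far side is outside: no hidden points near M at all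
    obtain ⟨z, hzH, hzd⟩ := Metric.mem_closure_iff.mp hMclosHid ε₃ hε₃pos
    have hzball : z ∈ ball M ε₃ := mem_ball.mpr (by rw [dist_comm]; exact hzd)
    rcases lt_trichotomy (κ z) 0 with h | h | h
    · exact (hout ⟨hzball, h⟩) (subset_closure (hHid_car hzH))
    · exact hzero_not z hzball h hzH
    · exact hseenpos z hzball h hzH
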